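/- For any fixed permutation π of G, the set of generators v ∈ Gen(V) for which π is an orbit symmetry with respect to v is relatively Zariski-closed in Gen(V). -/

import Mathlib

open MvPolynomial Matrix

section Aux

variable {k G : Type*} [Field k] [Group G] {d : ℕ}
  [DistribMulAction G (Fin d → k)] [SMulCommClass G k (Fin d → k)]

/-- The linear polynomial whose evaluation at `v` is `(g • v) t`. -/
noncomputable def OrbitSym.linPoly (g : G) (t : Fin d) : MvPolynomial (Fin d) k :=
  ∑ s : Fin d, MvPolynomial.C ((g • (Pi.single s 1 : Fin d → k)) t) * MvPolynomial.X s

lemma OrbitSym.eval_linPoly (g : G) (t : Fin d) (v : Fin d → k) :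
    MvPolynomial.eval v (OrbitSym.linPoly g t) = (g • v) t := by
  classical
  have L := DistribMulAction.toLinearMap k (Fin d → k) g
  have hv : ∑ s : Fin d, v s • (Pi.single s 1 : Fin d → k) = v := by
    have : ∀ s : Fin d, v s • (Pi.single s 1 : Fin d → k) = Pi.single s (v s) := by
      intro s
      ext u
      by_cases h : u = s
      · subst h; simp
      · simp [Pi.single_eq_of_ne h]
    simp_rw [this]
    exact Finset.univ_sum_single v
  have key : ∑ s : Fin d, v s • (g • (Pi.single s 1 : Fin d → k)) = g • v := by
    calc ∑ s : Fin d, v s • (g • (Pi.single s 1 : Fin d → k))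
        = ∑ s : Fin d, (DistribMulAction.toLinearMap k (Fin d → k) g)
            (v s • (Pi.single s 1 : Fin d → k)) := by
          simp only [LinearMap.map_smul]
          rfl
      _ = (DistribMulAction.toLinearMap k (Fin d → k) g)
            (∑ s : Fin d, v s • (Pi.single s 1 : Fin d → k)) := by
          rw [map_sum]
      _ = g • v := by rw [hv]; rfl
  calc MvPolynomial.eval v (OrbitSym.linPoly g t)
      = ∑ s : Fin d, (g • (Pi.single s 1 : Fin d → k)) t * v s := by
        simp [OrbitSym.linPoly]
    _ = (∑ s : Fin d, v s • (g • (Pi.single s 1 : Fin d → k))) t := by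
        simp [Finset.sum_apply, mul_comm]
    _ = (g • v) t := by rw [key]

end Aux

/-- For a fixed permutation `π` of `G`, the set of generators `v` for which
`π` is an orbit symmetry is relatively Zariski-closed in `Gen(V)`. -/
theorem orbit_sym_points_relatively_closed
    {k G : Type*} [Field k] [Infinite k] [Group G] [Finite G] (d : ℕ)
    [DistribMulAction G (Fin d → k)] [SMulCommClass G k (Fin d → k)]
    (π : Equiv.Perm G) :
    ∃ S : Set (MvPolynomial (Fin d) k),
      {v : Fin d → k | Submodule.span k (MulAction.orbit G v) = ⊤ ∧
          ∃ A : (Fin d → k) ≃ₗ[k] (Fin d → k), ∀ g : G, A (g • v) = π g • v} =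
        {v : Fin d → k | Submodule.span k (MulAction.orbit G v) = ⊤} ∩
          {v : Fin d → k | ∀ p ∈ S, MvPolynomial.eval v p = 0} := by
  classical
  -- the set of (d+1)-minors of the 2d × G matrix with columns (g•v, π g • v)
  refine ⟨{q | ∃ rows : Fin (d + 1) → (Fin d ⊕ Fin d), ∃ cols : Fin (d + 1) → G,
      q = Matrix.det (Matrix.of fun i j =>
        Sum.elim (OrbitSym.linPoly (cols j)) (OrbitSym.linPoly (π (cols j))) (rows i))}, ?_⟩
  ext v
  simp only [Set.mem_setOf_eq, Set.mem_inter_iff]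
  constructor
  · rintro ⟨hspan, A, hA⟩
    refine ⟨hspan, ?_⟩
    rintro p ⟨rows, cols, rfl⟩
    -- evaluate the determinant
    rw [RingHom.map_det, RingHom.mapMatrix_apply]
    have hentry : (Matrix.of fun i j =>
        Sum.elim (OrbitSym.linPoly (cols j)) (OrbitSym.linPoly (π (cols j))) (rows i)).map
          (MvPolynomial.eval v)
        = Matrix.of (fun i j => Sum.elim ((cols j) • v) ((π (cols j)) • v) (rows i)) := by
      ext i j
      simp only [Matrix.map_apply, Matrix.of_apply]
      cases h : rows i with
      | inl t => simp [OrbitSym.eval_linPoly]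
      | inr t => simp [OrbitSym.eval_linPoly]
    rw [hentry]
    -- the d+1 vectors (cols j) • v in k^d are dependent
    set u : Fin (d + 1) → (Fin d → k) := fun j => (cols j) • v with hu
    have hnli : ¬ LinearIndependent k u := by
      intro hli
      have := hli.fintype_card_le_finrank
      rw [Module.finrank_fintype_fun_eq_card] at this
      simp at this
    obtain ⟨c, hcsum, i₀, hi₀⟩ := Fintype.not_linearIndependent_iff.1 hnli
    rw [← Matrix.exists_mulVec_eq_zero_iff]
    refine ⟨c, fun h => hi₀ (congrFun h i₀), ?_⟩
    funext i
    simp only [Matrix.mulVec, dotProduct, Matrix.of_apply, Pi.zero_apply]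
    cases h : rows i with
    | inl t =>
      have := congrFun hcsum t
      simpa [Finset.sum_apply, mul_comm, hu] using this
    | inr t =>
      have h2 : ∑ j, c j • ((π (cols j)) • v) = 0 := by
        have he : ∀ j, (π (cols j)) • v = A.toLinearMap (u j) := fun j => (hA (cols j)).symm
        have heq : ∑ j, c j • ((π (cols j)) • v) = A.toLinearMap (∑ j, c j • u j) := by
          rw [map_sum]
          exact Finset.sum_congr rfl fun j _ => by rw [LinearMap.map_smul, he]
        rw [heq, hcsum, map_zero]
      have := congrFun h2 t
      simpa [Finset.sum_apply, mul_comm, hu] using this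
  · rintro ⟨hspan, hmin⟩
    refine ⟨hspan, ?_⟩
    -- extract a basis of k^d from the orbit
    have horb : MulAction.orbit G v = Set.range (fun g : G => g • v) := rfl
    obtain ⟨b, hbsub, hbspan, hbind⟩ :=
      exists_linearIndependent k (Set.range fun g : G => g • v)
    have hbspan' : Submodule.span k b = ⊤ := by
      rw [hbspan, ← horb, hspan]
    have hbfin : b.Finite := (Set.finite_range _).subset hbsub
    haveI : Fintype b := hbfin.fintype
    let B0 : Module.Basis b k (Fin d → k) :=
      Module.Basis.mk hbind (by rw [Subtype.range_coe, hbspan'])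
    let e : b ≃ Fin d := B0.indexEquiv (Pi.basisFun k (Fin d))
    let Bas : Module.Basis (Fin d) k (Fin d → k) := B0.reindex e
    have hBasmem : ∀ i : Fin d, Bas i ∈ Set.range (fun g : G => g • v) := by
      intro i
      apply hbsub
      have : Bas i = ((e.symm i : b) : Fin d → k) := by
        simp [Bas, B0, Module.Basis.reindex_apply, Module.Basis.mk_apply]
      rw [this]
      exact (e.symm i).2
    choose γ hγ using hBasmem
    -- the candidate linear map
    set A : (Fin d → k) →ₗ[k] (Fin d → k) := Bas.constr k (fun i => π (γ i) • v) with hAdef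
    -- the key computation using vanishing of the minors
    have hkey : ∀ g : G, A (g • v) = π g • v := by
      intro g
      set a : Fin d → k := fun i => Bas.repr (g • v) i with ha
      have hgv : g • v = ∑ i : Fin d, a i • Bas i := by
        conv_lhs => rw [← Bas.sum_repr (g • v)]
      have hAgv : A (g • v) = ∑ i : Fin d, a i • (π (γ i) • v) := by
        rw [hgv, map_sum]
        simp [hAdef, Module.Basis.constr_basis]
      funext t
      -- the chosen minor
      set rows : Fin (d + 1) → (Fin d ⊕ Fin d) :=
        Fin.snoc (fun i => Sum.inl i) (Sum.inr t) with hrows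
      set cols : Fin (d + 1) → G := Fin.snoc γ g with hcols
      have hdet : Matrix.det (Matrix.of fun i j =>
          Sum.elim ((cols j) • v) ((π (cols j)) • v) (rows i)) = 0 := by
        have := hmin _ ⟨rows, cols, rfl⟩
        rw [RingHom.map_det, RingHom.mapMatrix_apply] at this
        have hentry : (Matrix.of fun i j =>
            Sum.elim (OrbitSym.linPoly (cols j)) (OrbitSym.linPoly (π (cols j))) (rows i)).map
              (MvPolynomial.eval v)
            = Matrix.of (fun i j => Sum.elim ((cols j) • v) ((π (cols j)) • v) (rows i)) := by
          ext i j
          simp only [Matrix.map_apply, Matrix.of_apply]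
          cases h : rows i with
          | inl t' => simp [OrbitSym.eval_linPoly]
          | inr t' => simp [OrbitSym.eval_linPoly]
        rwa [hentry] at this
      obtain ⟨c, hc0, hcv⟩ := Matrix.exists_mulVec_eq_zero_iff.2 hdet
      -- the rows indexed by `inl` give a linear relation in k^d
      have htop : ∑ j, c j • ((cols j) • v) = 0 := by
        funext t'
        have := congrFun hcv (Fin.castSucc t')
        simp only [Matrix.mulVec, dotProduct, Matrix.of_apply, Pi.zero_apply] at this
        have hr : rows (Fin.castSucc t') = Sum.inl t' := by
          simp [hrows, Fin.snoc_castSucc]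
        rw [hr] at this  -- may need simp
        simpa [Finset.sum_apply, mul_comm] using this
      -- split off the last column
      have hsplit : (c (Fin.last d)) • (g • v)
          + ∑ i : Fin d, c (Fin.castSucc i) • Bas i = 0 := by
        have := htop
        rw [Fin.sum_univ_castSucc] at this
        simp only [hcols, Fin.snoc_castSucc, Fin.snoc_last] at this
        simp_rw [hγ] at this
        rw [add_comm] at this
        exact this
      -- coefficients vanish against the basis
      have hcoef : ∀ i : Fin d, c (Fin.castSucc i) + c (Fin.last d) * a i = 0 := by
        have hrel : ∑ i : Fin d, (c (Fin.castSucc i) + c (Fin.last d) * a i) • Bas i = 0 := by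
          have heq : ∑ i : Fin d, (c (Fin.castSucc i) + c (Fin.last d) * a i) • Bas i
              = c (Fin.last d) • (g • v) + ∑ i : Fin d, c (Fin.castSucc i) • Bas i := by
            rw [hgv, Finset.smul_sum, ← Finset.sum_add_distrib]
            refine Finset.sum_congr rfl fun i _ => ?_
            rw [add_smul, smul_smul, add_comm, mul_comm]
          rw [heq]
          exact hsplit
        have hli := Fintype.linearIndependent_iff.1 Bas.linearIndependent
        exact hli _ hrel
      have hlast : c (Fin.last d) ≠ 0 := by
        intro h0
        apply hc0
        funext j
        refine Fin.lastCases ?_ ?_ j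
        · exact h0
        · intro i
          have := hcoef i
          rw [h0] at this
          simpa using this
      -- the bottom row gives the claim
      have hbot : c (Fin.last d) * ((π g) • v) t
          + ∑ i : Fin d, c (Fin.castSucc i) * ((π (γ i)) • v) t = 0 := by
        have := congrFun hcv (Fin.last d)
        simp only [Matrix.mulVec, dotProduct, Matrix.of_apply, Pi.zero_apply] at this
        have hr : rows (Fin.last d) = Sum.inr t := by simp [hrows, Fin.snoc_last]
        rw [hr] at this
        rw [Fin.sum_univ_castSucc] at this
        simp only [hcols, Fin.snoc_castSucc, Fin.snoc_last] at this
        rw [add_comm] at this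
        simpa [mul_comm] using this
      have hAt : A (g • v) t = ∑ i : Fin d, a i * ((π (γ i)) • v) t := by
        rw [hAgv]
        simp [Finset.sum_apply]
      rw [hAt]
      -- substitute c (castSucc i) = - (c last * a i)
      have hsum : ∑ i : Fin d, c (Fin.castSucc i) * ((π (γ i)) • v) t
          = - (c (Fin.last d) * ∑ i : Fin d, a i * ((π (γ i)) • v) t) := by
        rw [Finset.mul_sum, ← Finset.sum_neg_distrib]
        refine Finset.sum_congr rfl fun i _ => ?_
        have hci : c (Fin.castSucc i) = -(c (Fin.last d) * a i) :=
          eq_neg_of_add_eq_zero_left (hcoef i)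
        rw [hci]; ring
      have heq : c (Fin.last d) * ((π g) • v) t
          = c (Fin.last d) * (∑ i : Fin d, a i * ((π (γ i)) • v) t) := by
        rw [hsum, add_neg_eq_zero] at hbot; exact hbot
      exact (mul_left_cancel₀ hlast heq).symm
    -- A is surjective, hence bijective
    have hsurj : Function.Surjective A := by
      rw [← LinearMap.range_eq_top]
      rw [← top_le_iff, ← hspan]
      rw [Submodule.span_le]
      rintro x ⟨g, rfl⟩
      exact ⟨π.symm g • v, by rw [hkey (π.symm g)]; simp⟩
    have hbij : Function.Bijective A :=
      ⟨LinearMap.injective_iff_surjective.2 hsurj, hsurj⟩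
    exact ⟨LinearEquiv.ofBijective A hbij, fun g => hkey g⟩
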